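/- For any integers a, b and any positive integer q, the number of pairs (γ₁, γ₂) of residues mod q satisfying a·γ₁² ≡ b·γ₂² (mod q) is at most gcd(lcm(a,b), q) · q · τ(q). -/

import Mathlib

open Finset

lemma aux_mod_fiber_card {Q m : ℕ} (hm : 0 < m) (hmQ : m ∣ Q) (s : Finset ℕ)
    (hs : ∀ x ∈ s, x < Q) (r : ℕ) :
    (s.filter (fun x => x % m = r)).card ≤ Q / m := by
  classical
  have key : (s.filter (fun x => x % m = r)).card ≤ (Finset.range (Q/m)).card := by
    apply Finset.card_le_card_of_injOn (fun x => x / m)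
    · intro x hx
      simp only [mem_coe, mem_filter] at hx
      exact Finset.mem_range.mpr (Nat.div_lt_div_of_lt_of_dvd hmQ (hs x hx.1))
    · intro x hx y hy hxy
      simp only [coe_filter, Set.mem_setOf_eq] at hx hy
      have hxy' : x / m = y / m := hxy
      have h1 := Nat.div_add_mod x m
      have h2 := Nat.div_add_mod y m
      rw [← hxy'] at h2
      omega
  simpa using key

lemma aux_L1 (Q m : ℕ) (hm : 0 < m) (hmQ : m ∣ Q) (c : ℤ) :
    ((Finset.range Q).filter (fun x : ℕ => (m:ℤ) ∣ 2*(x:ℤ) - c)).card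
      ≤ (if 2 ∣ m then 2 else 1) * (Q / m) := by
  classical
  set e : ℕ := if 2 ∣ m then 2 else 1 with he_def
  have he : e ∣ m := by
    by_cases h : 2 ∣ m <;> simp [he_def, h]
  have hepos : 0 < e := by by_cases h : 2 ∣ m <;> simp [he_def, h]
  have hme : 0 < m / e := Nat.div_pos (Nat.le_of_dvd hm he) hepos
  set s := (Finset.range Q).filter (fun x : ℕ => (m:ℤ) ∣ 2*(x:ℤ) - c) with hs_def
  set t := (Finset.range m).filter (fun r : ℕ => (m:ℤ) ∣ 2*(r:ℤ) - c) with ht_def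
  have hmain : s.card ≤ (Q / m) * t.card := by
    apply Finset.card_le_mul_card_image_of_maps_to (f := fun x => x % m)
    · intro x hx
      simp only [hs_def, mem_filter, mem_range] at hx
      simp only [ht_def, mem_filter, mem_range]
      refine ⟨Nat.mod_lt _ hm, ?_⟩
      have h0 : (x:ℤ) = (m:ℤ) * ((x/m : ℕ):ℤ) + ((x % m:ℕ):ℤ) := by
        exact_mod_cast (Nat.div_add_mod x m).symm
      have h1 : 2*((x % m:ℕ):ℤ) - c = (2*(x:ℤ) - c) - (m:ℤ)*(2*((x/m:ℕ):ℤ)) := by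
        rw [h0]; ring
      rw [h1]
      exact dvd_sub hx.2 (dvd_mul_right _ _)
    · intro r _
      apply aux_mod_fiber_card hm hmQ
      intro x hx
      simp only [hs_def, mem_filter, mem_range] at hx
      exact hx.1
  have htcard : t.card ≤ e := by
    have key : t.card ≤ (Finset.range e).card := by
      apply Finset.card_le_card_of_injOn (fun r => r / (m / e))
      · intro r hr
        simp only [ht_def, mem_coe, mem_filter, mem_range] at hr
        simp only [Finset.mem_coe, Finset.mem_range]
        rw [Nat.div_lt_iff_lt_mul hme, Nat.mul_div_cancel' he]
        exact hr.1
      · intro r hr r' hr' hq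
        simp only [ht_def, coe_filter, Set.mem_setOf_eq, mem_range] at hr hr'
        have hkey : ((m/e : ℕ):ℤ) ∣ (r:ℤ) - (r':ℤ) := by
          have h2 : (m:ℤ) ∣ 2*((r:ℤ) - (r':ℤ)) := by
            have hd := dvd_sub hr.2 hr'.2
            have heq : (2*(r:ℤ) - c) - (2*(r':ℤ) - c) = 2*((r:ℤ) - (r':ℤ)) := by ring
            rwa [heq] at hd
          by_cases h2m : 2 ∣ m
          · have hm2 : (m:ℤ) = 2 * ((m/2 : ℕ):ℤ) := by
              have : m = 2 * (m/2) := (Nat.two_mul_div_two_of_even (even_iff_two_dvd.mpr h2m)).symm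
              exact_mod_cast this
            obtain ⟨k, hk⟩ := h2
            rw [hm2] at hk
            have hcan : (r:ℤ) - (r':ℤ) = ((m/2 : ℕ):ℤ) * k := by
              apply mul_left_cancel₀ (two_ne_zero (α := ℤ))
              rw [hk]; ring
            simp only [he_def, h2m, if_pos]
            exact ⟨k, hcan⟩
          · have hg : Int.gcd (m:ℤ) 2 = 1 := by
              have hng : Nat.gcd m 2 = 1 := by
                rcases (Nat.dvd_prime Nat.prime_two).mp (Nat.gcd_dvd_right m 2) with h | h
                · exact h
                · exact absurd (h ▸ Nat.gcd_dvd_left m 2) h2m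
              simpa [Int.gcd] using hng
            have hdd : (m:ℤ) ∣ (r:ℤ) - (r':ℤ) := by
              apply Int.dvd_of_dvd_mul_left_of_gcd_one _ hg
              rw [mul_comm] at h2
              exact h2
            simpa [he_def, h2m] using hdd
        have hmod : (r':ℤ) % ((m/e:ℕ):ℤ) = (r:ℤ) % ((m/e:ℕ):ℤ) :=
          Int.modEq_iff_dvd.mpr hkey
        have hmodn : r' % (m/e) = r % (m/e) := by exact_mod_cast hmod
        have hq' : r / (m/e) = r' / (m/e) := hq
        have h1 := Nat.div_add_mod r (m/e)
        have h2 := Nat.div_add_mod r' (m/e)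
        rw [← hq'] at h2
        omega
    simpa using key
  calc s.card ≤ (Q/m) * t.card := hmain
    _ ≤ (Q/m) * e := Nat.mul_le_mul_left _ htcard
    _ = e * (Q/m) := Nat.mul_comm _ _

lemma aux_gcd_emod (A : ℤ) (n : ℕ) : Int.gcd (A % (n:ℤ)) (n:ℤ) = Int.gcd A (n:ℤ) := by
  apply Nat.dvd_antisymm
  · apply Int.natCast_dvd_natCast.mp
    apply Int.dvd_coe_gcd _ (Int.gcd_dvd_right _ _)
    have h1 : (↑(Int.gcd (A % (n:ℤ)) (n:ℤ)) : ℤ) ∣ A % (n:ℤ) := Int.gcd_dvd_left _ _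
    have h2 : (↑(Int.gcd (A % (n:ℤ)) (n:ℤ)) : ℤ) ∣ (n:ℤ) * (A / (n:ℤ)) :=
      Dvd.dvd.mul_right (Int.gcd_dvd_right _ _) _
    have h := dvd_add h1 h2
    rwa [Int.emod_add_mul_ediv A (n:ℤ)] at h
  · apply Int.natCast_dvd_natCast.mp
    apply Int.dvd_coe_gcd _ (Int.gcd_dvd_right _ _)
    have h1 : (↑(Int.gcd A (n:ℤ)) : ℤ) ∣ A := Int.gcd_dvd_left _ _
    have h2 : (↑(Int.gcd A (n:ℤ)) : ℤ) ∣ (n:ℤ) * (A / (n:ℤ)) :=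
      Dvd.dvd.mul_right (Int.gcd_dvd_right _ _) _
    have h := dvd_sub h1 h2
    rwa [← Int.emod_def A (n:ℤ)] at h

lemma aux_fiber (Q d : ℕ) (hQ : 0 < Q) (hd : d ∣ Q) (hdpos : 0 < d) :
    ((Finset.range Q ×ˢ Finset.range Q).filter
      (fun p : ℕ × ℕ => ((Q:ℤ) ∣ ((p.1:ℤ) - (p.2:ℤ)) * ((p.1:ℤ) + (p.2:ℤ)))
        ∧ Int.gcd ((p.1:ℤ) - (p.2:ℤ)) (Q:ℤ) = d)).card ≤ Q := by
  classical
  have hQ0 : Q ≠ 0 := hQ.ne'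
  set m : ℕ := Q / d with hm_def
  have hdm : d * m = Q := Nat.mul_div_cancel' hd
  have hm : 0 < m := Nat.div_pos (Nat.le_of_dvd hQ hd) hdpos
  have hmQ : m ∣ Q := Nat.div_dvd_of_dvd hd
  have hQm : Q / m = d := Nat.div_div_self hd hQ0
  set e : ℕ := if 2 ∣ m then 2 else 1 with he_def
  set F := ((Finset.range Q ×ˢ Finset.range Q).filter
      (fun p : ℕ × ℕ => ((Q:ℤ) ∣ ((p.1:ℤ) - (p.2:ℤ)) * ((p.1:ℤ) + (p.2:ℤ)))
        ∧ Int.gcd ((p.1:ℤ) - (p.2:ℤ)) (Q:ℤ) = d)) with hF_def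
  -- every solution has m ∣ x + y
  have hsum : ∀ p ∈ F, (m:ℤ) ∣ ((p.1:ℤ) + (p.2:ℤ)) := by
    intro p hp
    simp only [hF_def, mem_filter] at hp
    obtain ⟨-, hdvd, hgcd⟩ := hp
    set t : ℤ := (p.1:ℤ) - (p.2:ℤ) with ht_def
    have hdt : ((d:ℕ):ℤ) ∣ t := by
      rw [← hgcd]; exact Int.gcd_dvd_left _ _
    obtain ⟨u, hu⟩ := hdt
    have hdne : ((d:ℕ):ℤ) ≠ 0 := by exact_mod_cast hdpos.ne'
    have hcop : Int.gcd u (m:ℤ) = 1 := by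
      have h0 : 0 < Int.gcd t (Q:ℤ) := hgcd ▸ hdpos
      have hdiv := Int.gcd_div_gcd_div_gcd h0
      have ht2 : t / ((Int.gcd t (Q:ℤ) : ℕ):ℤ) = u := by
        rw [hgcd, hu]
        exact Int.mul_ediv_cancel_left u hdne
      have hQ2 : (Q:ℤ) / ((Int.gcd t (Q:ℤ) : ℕ):ℤ) = (m:ℤ) := by
        rw [hgcd, ← hdm]
        push_cast
        exact Int.mul_ediv_cancel_left _ hdne
      rwa [ht2, hQ2] at hdiv
    have h2 : ((d:ℤ)*(m:ℤ)) ∣ (d:ℤ) * (u * ((p.1:ℤ) + (p.2:ℤ))) := by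
      have hQeq : ((d:ℤ)*(m:ℤ)) = (Q:ℤ) := by exact_mod_cast hdm
      have heq : (d:ℤ) * (u * ((p.1:ℤ) + (p.2:ℤ))) = t * ((p.1:ℤ) + (p.2:ℤ)) := by
        rw [hu]; ring
      rw [hQeq, heq]
      exact hdvd
    have h3 : (m:ℤ) ∣ u * ((p.1:ℤ) + (p.2:ℤ)) := (mul_dvd_mul_iff_left hdne).mp h2
    exact Int.dvd_of_dvd_mul_right_of_gcd_one h3 (by rw [Int.gcd_comm]; exact hcop)
  set Tset := (Finset.range Q).filter (fun t : ℕ => Nat.gcd t Q = d ∧ (2 ∣ m → 2 ∣ t)) with hT_def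
  have hstep1 : F.card ≤ (e * d) * Tset.card := by
    apply Finset.card_le_mul_card_image_of_maps_to
      (f := fun p : ℕ × ℕ => (((p.1:ℤ) - (p.2:ℤ)) % (Q:ℤ)).toNat)
    · intro p hp
      have hps := hsum p hp
      simp only [hF_def, mem_filter, mem_product, mem_range] at hp
      obtain ⟨⟨hx, hy⟩, hdvd, hgcd⟩ := hp
      set t : ℤ := (p.1:ℤ) - (p.2:ℤ) with ht_def
      have h0 : 0 ≤ t % (Q:ℤ) := Int.emod_nonneg _ (by exact_mod_cast hQ0)
      have hlt : t % (Q:ℤ) < (Q:ℤ) := Int.emod_lt_of_pos _ (by exact_mod_cast hQ)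
      have hcast : (((t % (Q:ℤ)).toNat : ℕ) : ℤ) = t % (Q:ℤ) := Int.toNat_of_nonneg h0
      simp only [hT_def, mem_filter, mem_range]
      refine ⟨?_, ?_, ?_⟩
      · exact_mod_cast hcast ▸ hlt
      · have : Int.gcd (((t % (Q:ℤ)).toNat : ℕ) : ℤ) (Q:ℤ) = d := by
          rw [hcast, aux_gcd_emod, hgcd]
        rwa [Int.gcd_natCast_natCast] at this
      · intro h2m
        have h2s : (2:ℤ) ∣ ((p.1:ℤ) + (p.2:ℤ)) :=
          dvd_trans (by exact_mod_cast h2m) hps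
        have h2t : (2:ℤ) ∣ t := by
          have : t = ((p.1:ℤ) + (p.2:ℤ)) - 2 * (p.2:ℤ) := by rw [ht_def]; ring
          rw [this]
          exact dvd_sub h2s (dvd_mul_right _ _)
        have h2Q : (2:ℤ) ∣ (Q:ℤ) := by
          exact_mod_cast dvd_trans h2m hmQ
        have h2mod : (2:ℤ) ∣ t % (Q:ℤ) := by
          rw [Int.emod_def]
          exact dvd_sub h2t (Dvd.dvd.mul_right h2Q _)
        rw [← hcast] at h2mod
        exact_mod_cast h2mod
    · intro tval htval
      simp only [hT_def, mem_filter, mem_range] at htval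
      obtain ⟨htlt, htgcd, htpar⟩ := htval
      have hXbound := aux_L1 Q m hm hmQ (tval : ℤ)
      rw [hQm] at hXbound
      have key : (F.filter (fun p => (((p.1:ℤ) - (p.2:ℤ)) % (Q:ℤ)).toNat = tval)).card
          ≤ ((Finset.range Q).filter (fun x : ℕ => (m:ℤ) ∣ 2*(x:ℤ) - (tval:ℤ))).card := by
        apply Finset.card_le_card_of_injOn (fun p => p.1)
        · intro p hp
          have hps := hsum p (Finset.mem_of_mem_filter p hp)
          simp only [hF_def, mem_coe, mem_filter, mem_product, mem_range] at hp
          obtain ⟨⟨⟨hx, hy⟩, hdvd, hgcd⟩, hf⟩ := hp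
          set t : ℤ := (p.1:ℤ) - (p.2:ℤ) with ht_def
          have h0 : 0 ≤ t % (Q:ℤ) := Int.emod_nonneg _ (by exact_mod_cast hQ0)
          have hteq : t % (Q:ℤ) = (tval:ℤ) := by
            rw [← hf]
            exact (Int.toNat_of_nonneg h0).symm
          have hQdt : (Q:ℤ) ∣ t - (tval:ℤ) := by
            rw [← hteq, Int.emod_def]
            exact ⟨t / (Q:ℤ), by ring⟩
          have hmdt : (m:ℤ) ∣ t - (tval:ℤ) := dvd_trans (by exact_mod_cast hmQ) hQdt
          simp only [mem_coe, mem_filter, mem_range]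
          refine ⟨hx, ?_⟩
          have heq : 2*((p.1:ℤ)) - (tval:ℤ) = ((p.1:ℤ) + (p.2:ℤ)) + (t - (tval:ℤ)) := by
            rw [ht_def]; ring
          rw [heq]
          exact dvd_add hps hmdt
        · intro p hp p' hp' hpp
          have hpp' : p.1 = p'.1 := hpp
          simp only [hF_def, coe_filter, mem_filter, mem_product, mem_range,
            Set.mem_setOf_eq] at hp hp'
          obtain ⟨⟨⟨hx, hy⟩, -, -⟩, hf⟩ := hp
          obtain ⟨⟨⟨hx', hy'⟩, -, -⟩, hf'⟩ := hp'
          have h0 : 0 ≤ ((p.1:ℤ) - (p.2:ℤ)) % (Q:ℤ) := Int.emod_nonneg _ (by exact_mod_cast hQ0)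
          have h0' : 0 ≤ ((p'.1:ℤ) - (p'.2:ℤ)) % (Q:ℤ) := Int.emod_nonneg _ (by exact_mod_cast hQ0)
          have hmm : ((p.1:ℤ) - (p.2:ℤ)) % (Q:ℤ) = ((p'.1:ℤ) - (p'.2:ℤ)) % (Q:ℤ) := by
            have := hf.trans hf'.symm
            rw [← Int.toNat_of_nonneg h0, ← Int.toNat_of_nonneg h0']
            exact_mod_cast this
          rw [hpp'] at hmm
          have hy2 : ((p.2:ℤ)) % (Q:ℤ) = ((p'.2:ℤ)) % (Q:ℤ) := by
            have hmodeq : ((p'.1:ℤ) - (p.2:ℤ)) ≡ ((p'.1:ℤ) - (p'.2:ℤ)) [ZMOD (Q:ℤ)] := hmm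
            have h2 : (Q:ℤ) ∣ ((p'.1:ℤ) - (p.2:ℤ)) - ((p'.1:ℤ) - (p'.2:ℤ)) :=
              Int.ModEq.dvd hmodeq.symm
            have heq : ((p'.1:ℤ) - (p.2:ℤ)) - ((p'.1:ℤ) - (p'.2:ℤ)) = (p'.2:ℤ) - (p.2:ℤ) := by
              ring
            rw [heq] at h2
            exact Int.modEq_iff_dvd.mpr h2
          have hyy : p.2 % Q = p'.2 % Q := by exact_mod_cast hy2
          rw [Nat.mod_eq_of_lt hy, Nat.mod_eq_of_lt hy'] at hyy
          exact Prod.ext hpp' hyy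
      calc (F.filter (fun p => (((p.1:ℤ) - (p.2:ℤ)) % (Q:ℤ)).toNat = tval)).card
          ≤ ((Finset.range Q).filter (fun x : ℕ => (m:ℤ) ∣ 2*(x:ℤ) - (tval:ℤ))).card := key
        _ ≤ e * d := hXbound
  have hstep2 : Tset.card ≤ (if 2 ∣ m then m/2 else m) := by
    by_cases h2m : 2 ∣ m
    · rw [if_pos h2m]
      have key : Tset.card ≤ (Finset.range (m/2)).card := by
        apply Finset.card_le_card_of_injOn (fun t => t / d / 2)
        · intro t ht
          simp only [hT_def, mem_coe, mem_filter, mem_range] at ht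
          obtain ⟨htlt, htgcd, htpar⟩ := ht
          have hdt : d ∣ t := htgcd ▸ Nat.gcd_dvd_left t Q
          have hu_lt : t / d < m := by
            rw [hm_def]
            exact Nat.div_lt_div_of_lt_of_dvd hd htlt
          have hgpos : 0 < Nat.gcd t Q := htgcd ▸ hdpos
          have hcop : Nat.Coprime (t / d) m := by
            have := Nat.coprime_div_gcd_div_gcd hgpos
            rwa [htgcd, ← hm_def] at this
          have hodd : ¬ 2 ∣ (t / d) := by
            intro h2u
            have : 2 ∣ Nat.gcd (t/d) m := Nat.dvd_gcd h2u h2m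
            rw [hcop] at this
            omega
          simp only [mem_coe, mem_range]
          omega
        · intro t ht t' ht' htt
          simp only [hT_def, coe_filter, Set.mem_setOf_eq, mem_range] at ht ht'
          obtain ⟨htlt, htgcd, htpar⟩ := ht
          obtain ⟨htlt', htgcd', htpar'⟩ := ht'
          have hdt : d ∣ t := htgcd ▸ Nat.gcd_dvd_left t Q
          have hdt' : d ∣ t' := htgcd' ▸ Nat.gcd_dvd_left t' Q
          have hgpos : 0 < Nat.gcd t Q := htgcd ▸ hdpos
          have hgpos' : 0 < Nat.gcd t' Q := htgcd' ▸ hdpos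
          have hcop : Nat.Coprime (t / d) m := by
            have := Nat.coprime_div_gcd_div_gcd hgpos
            rwa [htgcd, ← hm_def] at this
          have hcop' : Nat.Coprime (t' / d) m := by
            have := Nat.coprime_div_gcd_div_gcd hgpos'
            rwa [htgcd', ← hm_def] at this
          have hodd : ¬ 2 ∣ (t / d) := by
            intro h2u
            have : 2 ∣ Nat.gcd (t/d) m := Nat.dvd_gcd h2u h2m
            rw [hcop] at this
            omega
          have hodd' : ¬ 2 ∣ (t' / d) := by
            intro h2u
            have : 2 ∣ Nat.gcd (t'/d) m := Nat.dvd_gcd h2u h2m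
            rw [hcop'] at this
            omega
          have htt' : t / d / 2 = t' / d / 2 := htt
          have hu : t / d = t' / d := by omega
          have h1 : t / d * d = t := Nat.div_mul_cancel hdt
          have h2 : t' / d * d = t' := Nat.div_mul_cancel hdt'
          rw [← h1, ← h2, hu]
      simpa using key
    · rw [if_neg h2m]
      have key : Tset.card ≤ (Finset.range m).card := by
        apply Finset.card_le_card_of_injOn (fun t => t / d)
        · intro t ht
          simp only [hT_def, mem_coe, mem_filter, mem_range] at ht
          obtain ⟨htlt, htgcd, -⟩ := ht
          simp only [mem_coe, mem_range]
          rw [hm_def]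
          exact Nat.div_lt_div_of_lt_of_dvd hd htlt
        · intro t ht t' ht' htt
          simp only [hT_def, coe_filter, Set.mem_setOf_eq, mem_range] at ht ht'
          obtain ⟨htlt, htgcd, -⟩ := ht
          obtain ⟨htlt', htgcd', -⟩ := ht'
          have hdt : d ∣ t := htgcd ▸ Nat.gcd_dvd_left t Q
          have hdt' : d ∣ t' := htgcd' ▸ Nat.gcd_dvd_left t' Q
          have htt' : t / d = t' / d := htt
          have h1 : t / d * d = t := Nat.div_mul_cancel hdt
          have h2 : t' / d * d = t' := Nat.div_mul_cancel hdt'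
          rw [← h1, ← h2, htt']
      simpa using key
  calc F.card ≤ (e * d) * Tset.card := hstep1
    _ ≤ (e * d) * (if 2 ∣ m then m/2 else m) := Nat.mul_le_mul_left _ hstep2
    _ ≤ Q := by
      by_cases h2m : 2 ∣ m
      · rw [if_pos h2m]
        have h22 : 2 * (m/2) = m := by omega
        have : e = 2 := by rw [he_def, if_pos h2m]
        rw [this]
        calc 2 * d * (m/2) = d * (2 * (m/2)) := by ring
          _ = d * m := by rw [h22]
          _ ≤ Q := hdm.le
      · rw [if_neg h2m]
        have : e = 1 := by rw [he_def, if_neg h2m]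
        rw [this, one_mul]
        exact hdm.le

lemma aux_core (Q : ℕ) (hQ : 0 < Q) :
    ((Finset.range Q ×ˢ Finset.range Q).filter
      (fun p : ℕ × ℕ => (Q:ℤ) ∣ ((p.1:ℤ) - (p.2:ℤ)) * ((p.1:ℤ) + (p.2:ℤ)))).card
      ≤ Q * Q.divisors.card := by
  classical
  have hQ0 : Q ≠ 0 := hQ.ne'
  set S := ((Finset.range Q ×ˢ Finset.range Q).filter
      (fun p : ℕ × ℕ => (Q:ℤ) ∣ ((p.1:ℤ) - (p.2:ℤ)) * ((p.1:ℤ) + (p.2:ℤ)))) with hS_def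
  have hmaps : ∀ p ∈ S, Int.gcd ((p.1:ℤ) - (p.2:ℤ)) (Q:ℤ) ∈ Q.divisors := by
    intro p _
    rw [Nat.mem_divisors]
    constructor
    · have h : ((Int.gcd ((p.1:ℤ) - (p.2:ℤ)) (Q:ℤ) : ℕ) : ℤ) ∣ (Q:ℤ) := Int.gcd_dvd_right _ _
      exact_mod_cast h
    · exact hQ0
  rw [Finset.card_eq_sum_card_fiberwise hmaps]
  have hbound : ∀ d ∈ Q.divisors,
      (S.filter (fun p => Int.gcd ((p.1:ℤ) - (p.2:ℤ)) (Q:ℤ) = d)).card ≤ Q := by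
    intro d hd
    rw [Nat.mem_divisors] at hd
    have hdpos : 0 < d := Nat.pos_of_dvd_of_pos hd.1 hQ
    have hfib := aux_fiber Q d hQ hd.1 hdpos
    rw [hS_def, Finset.filter_filter]
    exact hfib
  calc ∑ d ∈ Q.divisors, (S.filter (fun p => Int.gcd ((p.1:ℤ) - (p.2:ℤ)) (Q:ℤ) = d)).card
      ≤ ∑ _d ∈ Q.divisors, Q := Finset.sum_le_sum hbound
    _ = Q.divisors.card * Q := by rw [Finset.sum_const, smul_eq_mul]
    _ = Q * Q.divisors.card := Nat.mul_comm _ _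

lemma aux_diag (a : ℤ) (ha : a ≠ 0) (q : ℕ) (hq : 0 < q) :
    ((Finset.range q ×ˢ Finset.range q).filter
        (fun p : ℕ × ℕ =>
          (a * (p.1 : ℤ) ^ 2) % (q : ℤ) = (a * (p.2 : ℤ) ^ 2) % (q : ℤ))).card
      ≤ Nat.gcd a.natAbs q * q * q.divisors.card := by
  classical
  have hq0 : q ≠ 0 := hq.ne'
  set g : ℕ := Nat.gcd a.natAbs q with hg_def
  have hgpos : 0 < g := Nat.gcd_pos_of_pos_right _ hq
  have hgq : g ∣ q := Nat.gcd_dvd_right _ _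
  set Q : ℕ := q / g with hQ_def
  have hQpos : 0 < Q := Nat.div_pos (Nat.le_of_dvd hq hgq) hgpos
  have hQq : Q ∣ q := Nat.div_dvd_of_dvd hgq
  have hgQ : g * Q = q := Nat.mul_div_cancel' hgq
  set A : ℕ := a.natAbs / g with hA_def
  have hgA : g ∣ a.natAbs := Nat.gcd_dvd_left _ _
  have hA : a.natAbs = g * A := (Nat.mul_div_cancel' hgA).symm
  have hcop : Nat.Coprime A Q := Nat.coprime_div_gcd_div_gcd hgpos
  have hequiv : ∀ M : ℤ, ((q:ℤ) ∣ a * M ↔ (Q:ℤ) ∣ M) := by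
    intro M
    rw [Int.natCast_dvd, Int.natCast_dvd, Int.natAbs_mul, hA, ← hgQ,
      mul_assoc, Nat.mul_dvd_mul_iff_left hgpos]
    constructor
    · intro h
      exact Nat.Coprime.dvd_of_dvd_mul_left hcop.symm h
    · intro h
      exact Dvd.dvd.mul_left h A
  have hcond : ∀ p : ℕ × ℕ,
      ((a * (p.1 : ℤ) ^ 2) % (q : ℤ) = (a * (p.2 : ℤ) ^ 2) % (q : ℤ))
        ↔ (Q:ℤ) ∣ ((p.1:ℤ) - (p.2:ℤ)) * ((p.1:ℤ) + (p.2:ℤ)) := by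
    intro p
    rw [Int.emod_eq_emod_iff_emod_sub_eq_zero, ← Int.dvd_iff_emod_eq_zero]
    have heq : a * (p.1:ℤ)^2 - a * (p.2:ℤ)^2
        = a * (((p.1:ℤ) - (p.2:ℤ)) * ((p.1:ℤ) + (p.2:ℤ))) := by ring
    rw [heq]
    exact hequiv _
  set D := ((Finset.range q ×ˢ Finset.range q).filter
        (fun p : ℕ × ℕ =>
          (a * (p.1 : ℤ) ^ 2) % (q : ℤ) = (a * (p.2 : ℤ) ^ 2) % (q : ℤ))) with hD_def
  set SQ := ((Finset.range Q ×ˢ Finset.range Q).filter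
      (fun p : ℕ × ℕ => (Q:ℤ) ∣ ((p.1:ℤ) - (p.2:ℤ)) * ((p.1:ℤ) + (p.2:ℤ)))) with hSQ_def
  have hstep : D.card ≤ (g * g) * SQ.card := by
    apply Finset.card_le_mul_card_image_of_maps_to
      (f := fun p : ℕ × ℕ => (p.1 % Q, p.2 % Q))
    · intro p hp
      simp only [hD_def, mem_filter, mem_product, mem_range] at hp
      obtain ⟨⟨hx, hy⟩, hC⟩ := hp
      rw [hcond p] at hC
      simp only [hSQ_def, mem_filter, mem_product, mem_range]
      refine ⟨⟨Nat.mod_lt _ hQpos, Nat.mod_lt _ hQpos⟩, ?_⟩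
      have h1 : (p.1:ℤ) ≡ ((p.1 % Q : ℕ):ℤ) [ZMOD (Q:ℤ)] := by
        have : ((p.1 % Q : ℕ):ℤ) = (p.1:ℤ) % (Q:ℤ) := by push_cast; ring
        rw [Int.ModEq, this, Int.emod_emod_of_dvd _ dvd_rfl]
      have h2 : (p.2:ℤ) ≡ ((p.2 % Q : ℕ):ℤ) [ZMOD (Q:ℤ)] := by
        have : ((p.2 % Q : ℕ):ℤ) = (p.2:ℤ) % (Q:ℤ) := by push_cast; ring
        rw [Int.ModEq, this, Int.emod_emod_of_dvd _ dvd_rfl]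
      have hmod := (h1.sub h2).mul (h1.add h2)
      have h0 : ((p.1:ℤ) - (p.2:ℤ)) * ((p.1:ℤ) + (p.2:ℤ)) ≡ 0 [ZMOD (Q:ℤ)] :=
        (Int.modEq_zero_iff_dvd).mpr hC
      exact (Int.modEq_zero_iff_dvd).mp (hmod.symm.trans h0)
    · intro r hr
      have key : (D.filter (fun p => (p.1 % Q, p.2 % Q) = r)).card
          ≤ ((Finset.range g) ×ˢ (Finset.range g)).card := by
        apply Finset.card_le_card_of_injOn (fun p => (p.1 / Q, p.2 / Q))
        · intro p hp
          simp only [hD_def, mem_coe, mem_filter, mem_product, mem_range] at hp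
          obtain ⟨⟨⟨hx, hy⟩, -⟩, -⟩ := hp
          simp only [mem_coe, mem_product, mem_range]
          constructor
          · rw [Nat.div_lt_iff_lt_mul hQpos]
            omega
          · rw [Nat.div_lt_iff_lt_mul hQpos]
            omega
        · intro p hp p' hp' hpp
          simp only [hD_def, coe_filter, mem_filter, mem_product, mem_range,
            Set.mem_setOf_eq] at hp hp'
          obtain ⟨⟨⟨hx, hy⟩, -⟩, hf⟩ := hp
          obtain ⟨⟨⟨hx', hy'⟩, -⟩, hf'⟩ := hp'
          have e1 : p.1 % Q = p'.1 % Q := by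
            have := hf.trans hf'.symm
            exact congrArg Prod.fst this
          have e2 : p.2 % Q = p'.2 % Q := by
            have := hf.trans hf'.symm
            exact congrArg Prod.snd this
          have e3 : p.1 / Q = p'.1 / Q := congrArg Prod.fst hpp
          have e4 : p.2 / Q = p'.2 / Q := congrArg Prod.snd hpp
          have d1 := Nat.div_add_mod p.1 Q
          have d2 := Nat.div_add_mod p'.1 Q
          have d3 := Nat.div_add_mod p.2 Q
          have d4 := Nat.div_add_mod p'.2 Q
          rw [e3, e1] at d1
          rw [e4, e2] at d3
          exact Prod.ext (by omega) (by omega)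
      calc (D.filter (fun p => (p.1 % Q, p.2 % Q) = r)).card
          ≤ ((Finset.range g) ×ˢ (Finset.range g)).card := key
        _ = g * g := by rw [Finset.card_product, Finset.card_range]
  have hcore := aux_core Q hQpos
  have hτ : Q.divisors.card ≤ q.divisors.card :=
    Finset.card_le_card (Nat.divisors_subset_of_dvd hq0 hQq)
  calc D.card ≤ (g * g) * SQ.card := hstep
    _ ≤ (g * g) * (Q * Q.divisors.card) := Nat.mul_le_mul_left _ hcore
    _ = (g * (g * Q)) * Q.divisors.card := by ring
    _ = (g * q) * Q.divisors.card := by rw [hgQ]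
    _ ≤ (g * q) * q.divisors.card := Nat.mul_le_mul_left _ hτ
    _ = Nat.gcd a.natAbs q * q * q.divisors.card := by rw [hg_def]

lemma aux_count (a b : ℤ) (q : ℕ) (hq : 0 < q) :
    ((Finset.range q ×ˢ Finset.range q).filter
        (fun p : ℕ × ℕ =>
          (a * (p.1 : ℤ) ^ 2) % (q : ℤ) = (b * (p.2 : ℤ) ^ 2) % (q : ℤ))).card
      = ∑ c ∈ Finset.range q,
          ((Finset.range q).filter (fun x : ℕ => ((a*(x:ℤ)^2) % (q:ℤ)).toNat = c)).card *
          ((Finset.range q).filter (fun y : ℕ => ((b*(y:ℤ)^2) % (q:ℤ)).toNat = c)).card := by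
  classical
  have hq0 : (q:ℤ) ≠ 0 := by exact_mod_cast hq.ne'
  have hmaps : ∀ p : ℕ × ℕ, p ∈ ((Finset.range q ×ˢ Finset.range q).filter
        (fun p : ℕ × ℕ =>
          (a * (p.1 : ℤ) ^ 2) % (q : ℤ) = (b * (p.2 : ℤ) ^ 2) % (q : ℤ))) →
      ((a*(p.1:ℤ)^2) % (q:ℤ)).toNat ∈ Finset.range q := by
    intro p _
    have h0 : 0 ≤ (a*(p.1:ℤ)^2) % (q:ℤ) := Int.emod_nonneg _ hq0
    have hlt : (a*(p.1:ℤ)^2) % (q:ℤ) < (q:ℤ) := Int.emod_lt_of_pos _ (by exact_mod_cast hq)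
    rw [Finset.mem_range]
    have := Int.toNat_of_nonneg h0
    exact_mod_cast this ▸ hlt
  rw [Finset.card_eq_sum_card_fiberwise hmaps]
  apply Finset.sum_congr rfl
  intro c _
  rw [Finset.filter_filter]
  have hset : (Finset.range q ×ˢ Finset.range q).filter
      (fun p : ℕ × ℕ =>
        ((a * (p.1 : ℤ) ^ 2) % (q : ℤ) = (b * (p.2 : ℤ) ^ 2) % (q : ℤ))
          ∧ ((a*(p.1:ℤ)^2) % (q:ℤ)).toNat = c)
      = ((Finset.range q).filter (fun x : ℕ => ((a*(x:ℤ)^2) % (q:ℤ)).toNat = c)) ×ˢ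
        ((Finset.range q).filter (fun y : ℕ => ((b*(y:ℤ)^2) % (q:ℤ)).toNat = c)) := by
    rw [← Finset.filter_product]
    apply Finset.filter_congr
    intro p _
    have h0a : 0 ≤ (a*(p.1:ℤ)^2) % (q:ℤ) := Int.emod_nonneg _ hq0
    have h0b : 0 ≤ (b*(p.2:ℤ)^2) % (q:ℤ) := Int.emod_nonneg _ hq0
    constructor
    · rintro ⟨h1, h2⟩
      exact ⟨h2, by rw [← h1]; exact h2⟩
    · rintro ⟨h1, h2⟩
      have : (a*(p.1:ℤ)^2) % (q:ℤ) = (b*(p.2:ℤ)^2) % (q:ℤ) := by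
        rw [← Int.toNat_of_nonneg h0a, ← Int.toNat_of_nonneg h0b, h1, h2]
      exact ⟨this, h1⟩
  rw [hset, Finset.card_product]

/-- For integers `a, b` not both zero and `q ≥ 1`, the number of pairs `(γ₁, γ₂)`
of residues mod `q` with `a γ₁² ≡ b γ₂² (mod q)` is at most `gcd(lcm(a,b), q) · q · τ(q)`. -/
theorem stmt6 (a b : ℤ) (hab : ¬(a = 0 ∧ b = 0)) (q : ℕ) (hq : 0 < q) :
    ((Finset.range q ×ˢ Finset.range q).filter
        (fun p : ℕ × ℕ =>
          (a * (p.1 : ℤ) ^ 2) % (q : ℤ) = (b * (p.2 : ℤ) ^ 2) % (q : ℤ))).card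
      ≤ Nat.gcd (Int.lcm a b) q * q * q.divisors.card := by
  classical
  have hq0 : q ≠ 0 := hq.ne'
  have hτpos : 0 < q.divisors.card :=
    Finset.card_pos.mpr ⟨1, Nat.one_mem_divisors.mpr hq0⟩
  by_cases hz : a = 0 ∨ b = 0
  · have hlcm : Int.lcm a b = 0 := by
      rcases hz with h | h
      · rw [h]; exact Int.lcm_zero_left b
      · rw [h]; exact Int.lcm_zero_right a
    rw [hlcm, Nat.gcd_zero_left]
    calc ((Finset.range q ×ˢ Finset.range q).filter
        (fun p : ℕ × ℕ =>
          (a * (p.1 : ℤ) ^ 2) % (q : ℤ) = (b * (p.2 : ℤ) ^ 2) % (q : ℤ))).card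
        ≤ (Finset.range q ×ˢ Finset.range q).card := Finset.card_filter_le _ _
      _ = q * q := by rw [Finset.card_product, Finset.card_range]
      _ ≤ q * q * q.divisors.card := Nat.le_mul_of_pos_right _ hτpos
  · push_neg at hz
    obtain ⟨ha, hb⟩ := hz
    set T := q.divisors.card with hT_def
    set G := Nat.gcd (Int.lcm a b) q with hG_def
    have hGpos : 0 < G := Nat.gcd_pos_of_pos_right _ hq
    have hga : Nat.gcd a.natAbs q ≤ G := by
      apply Nat.le_of_dvd hGpos
      apply Nat.gcd_dvd_gcd_of_dvd_left
      rw [Int.lcm_def]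
      exact Nat.dvd_lcm_left _ _
    have hgb : Nat.gcd b.natAbs q ≤ G := by
      apply Nat.le_of_dvd hGpos
      apply Nat.gcd_dvd_gcd_of_dvd_left
      rw [Int.lcm_def]
      exact Nat.dvd_lcm_right _ _
    set rA : ℕ → ℕ := fun c =>
      ((Finset.range q).filter (fun x : ℕ => ((a*(x:ℤ)^2) % (q:ℤ)).toNat = c)).card with hrA
    set rB : ℕ → ℕ := fun c =>
      ((Finset.range q).filter (fun y : ℕ => ((b*(y:ℤ)^2) % (q:ℤ)).toNat = c)).card with hrB
    have hNab := aux_count a b q hq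
    have hNaa := aux_count a a q hq
    have hNbb := aux_count b b q hq
    set N := ((Finset.range q ×ˢ Finset.range q).filter
        (fun p : ℕ × ℕ =>
          (a * (p.1 : ℤ) ^ 2) % (q : ℤ) = (b * (p.2 : ℤ) ^ 2) % (q : ℤ))).card with hN
    set Naa := ((Finset.range q ×ˢ Finset.range q).filter
        (fun p : ℕ × ℕ =>
          (a * (p.1 : ℤ) ^ 2) % (q : ℤ) = (a * (p.2 : ℤ) ^ 2) % (q : ℤ))).card with hNaa2
    set Nbb := ((Finset.range q ×ˢ Finset.range q).filter
        (fun p : ℕ × ℕ =>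
          (b * (p.1 : ℤ) ^ 2) % (q : ℤ) = (b * (p.2 : ℤ) ^ 2) % (q : ℤ))).card with hNbb2
    have hCS : N^2 ≤ Naa * Nbb := by
      have hint := Finset.sum_mul_sq_le_sq_mul_sq (Finset.range q)
        (fun c => ((rA c : ℕ):ℤ)) (fun c => ((rB c : ℕ):ℤ))
      have hNint : (N:ℤ) = ∑ c ∈ Finset.range q, ((rA c : ℕ):ℤ) * ((rB c : ℕ):ℤ) := by
        rw [hNab]
        push_cast
        rfl
      have hNaaint : (Naa:ℤ) = ∑ c ∈ Finset.range q, ((rA c : ℕ):ℤ)^2 := by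
        rw [hNaa]
        push_cast
        apply Finset.sum_congr rfl
        intro c _
        ring
      have hNbbint : (Nbb:ℤ) = ∑ c ∈ Finset.range q, ((rB c : ℕ):ℤ)^2 := by
        rw [hNbb]
        push_cast
        apply Finset.sum_congr rfl
        intro c _
        ring
      have : (N:ℤ)^2 ≤ (Naa:ℤ) * (Nbb:ℤ) := by
        rw [hNint, hNaaint, hNbbint]
        exact hint
      exact_mod_cast this
    have hdiaga := aux_diag a ha q hq
    have hdiagb := aux_diag b hb q hq
    have hfin : N^2 ≤ (G * q * T)^2 := by
      calc N^2 ≤ Naa * Nbb := hCS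
        _ ≤ (Nat.gcd a.natAbs q * q * T) * (Nat.gcd b.natAbs q * q * T) :=
            Nat.mul_le_mul hdiaga hdiagb
        _ ≤ (G * q * T) * (G * q * T) := by
            apply Nat.mul_le_mul
            · exact Nat.mul_le_mul_right _ (Nat.mul_le_mul_right _ hga)
            · exact Nat.mul_le_mul_right _ (Nat.mul_le_mul_right _ hgb)
        _ = (G * q * T)^2 := (sq _).symm
    exact (Nat.pow_le_pow_iff_left (by norm_num)).mp hfin
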